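/- Let p_1, …, p_n be pairwise distinct primes with 2^(η-1) ≤ p_i for all i, let x_0 = ∏_{i=1}^n p_i and p̂_i = x_0 / p_i. Let P̂ be an integer with P̂ ≡ p̂_i (mod p_i) for every i, and let a be an integer with a ≡ r_i (mod p_i) where |r_i| < 2^ε for every i. Then (1) a·P̂ ≡ ∑_{i=1}^n r_i·p̂_i (mod x_0), and (2) if moreover n·2^(ε+1) ≤ 2^(η-1), then |∑_{i=1}^n r_i·p̂_i| < x_0/2, so ∑_{i=1}^n r_i·p̂_i is the unique representative of a·P̂ mod x_0 lying in the interval (−x_0/2, x_0/2]. -/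

import Mathlib

/-- CHLRS15 CRT-ACD key lemma: for pairwise distinct η-bit primes `p i` with
product `x0` and `phat i = x0 / p i`, an auxiliary `P ≡ phat i (mod p i)` and a
sample `a ≡ r i (mod p i)` with `|r i| < 2^ε` satisfy
`a * P ≡ ∑ i, r i * phat i (mod x0)`; and if `n * 2^(ε+1) ≤ 2^(η-1)` then the
sum lies in `(-x0/2, x0/2]` and is the unique such representative. -/
theorem clt_crt_acd_lemma (n η ε : ℕ) (p : Fin n → ℤ)
    (hp : ∀ i, Prime (p i))
    (hdist : ∀ i j : Fin n, i ≠ j → p i ≠ p j)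
    (hsize : ∀ i, (2 : ℤ) ^ (η - 1) ≤ p i)
    (x0 : ℤ) (hx0 : x0 = ∏ i, p i)
    (phat : Fin n → ℤ) (hphat : ∀ i, phat i = x0 / p i)
    (P : ℤ) (hP : ∀ i, P ≡ phat i [ZMOD p i])
    (a : ℤ) (r : Fin n → ℤ)
    (ha : ∀ i, a ≡ r i [ZMOD p i])
    (hr : ∀ i, |r i| < 2 ^ ε) :
    (a * P ≡ ∑ i, r i * phat i [ZMOD x0]) ∧
    ((n : ℤ) * 2 ^ (ε + 1) ≤ 2 ^ (η - 1) →
      2 * |∑ i, r i * phat i| < x0 ∧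
      ∀ m : ℤ, a * P ≡ m [ZMOD x0] → -x0 < 2 * m → 2 * m ≤ x0 →
        m = ∑ i, r i * phat i) := by
  have h2pos : (0:ℤ) < 2 ^ (η - 1) := by positivity
  have hppos : ∀ i, 0 < p i := fun i => lt_of_lt_of_le h2pos (hsize i)
  have hx0pos : 0 < x0 := hx0 ▸ Finset.prod_pos (fun i _ => hppos i)
  have hphat_eq : ∀ i, phat i = ∏ j ∈ Finset.univ.erase i, p j := by
    intro i
    rw [hphat, hx0, ← Finset.mul_prod_erase _ _ (Finset.mem_univ i),
      Int.mul_ediv_cancel_left _ (hppos i).ne']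
  have hphatpos : ∀ i, 0 < phat i := by
    intro i; rw [hphat_eq]; exact Finset.prod_pos (fun j _ => hppos j)
  have hdvd_phat : ∀ i j : Fin n, i ≠ j → p i ∣ phat j := by
    intro i j h
    rw [hphat_eq]
    exact Finset.dvd_prod_of_mem _ (Finset.mem_erase.2 ⟨h, Finset.mem_univ i⟩)
  have key : ∀ i, a * P ≡ ∑ j, r j * phat j [ZMOD p i] := by
    intro i
    have h1 : a * P ≡ r i * phat i [ZMOD p i] := (ha i).mul (hP i)
    have h2 : (∑ j, r j * phat j) ≡ r i * phat i [ZMOD p i] := by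
      have : (∑ j, r j * phat j) - r i * phat i
          = ∑ j ∈ Finset.univ.erase i, r j * phat j := by
        rw [Finset.sum_erase_eq_sub (Finset.mem_univ i)]
      refine (Int.modEq_iff_dvd.2 ?_).symm
      rw [this]
      exact Finset.dvd_sum fun j hj =>
        Dvd.dvd.mul_left (hdvd_phat i j (Ne.symm (Finset.mem_erase.1 hj).1)) _
    exact h1.trans h2.symm
  have hcop : ((Finset.univ : Finset (Fin n)) : Set (Fin n)).Pairwise (Function.onFun IsCoprime p) := by
    intro i _ j _ hij
    refine (hp i).coprime_iff_not_dvd.2 fun hd => ?_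
    have := ((hp i).associated_of_dvd (hp j) hd)
    rcases Int.associated_iff.1 this with h | h
    · exact hdist i j hij h
    · have h1 := hppos i; have h2 := hppos j; omega
  have hmain : a * P ≡ ∑ i, r i * phat i [ZMOD x0] := by
    rw [hx0]
    have : ∀ i ∈ Finset.univ, p i ∣ (∑ j, r j * phat j) - a * P :=
      fun i _ => (key i).dvd
    exact Int.modEq_iff_dvd.2 (Finset.prod_dvd_of_coprime hcop this)
  refine ⟨hmain, fun hbound => ?_⟩
  have habs : 2 * |∑ i, r i * phat i| < x0 := by
    rcases Nat.eq_zero_or_pos n with hn | hn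
    · subst hn
      simp only [Finset.univ_eq_empty, Finset.sum_empty, abs_zero, mul_zero]
      exact hx0pos
    have hb1 : ∀ i, |r i * phat i| ≤ (2 ^ ε - 1) * phat i := by
      intro i
      rw [abs_mul, abs_of_pos (hphatpos i)]
      exact mul_le_mul_of_nonneg_right (by have := hr i; omega) (hphatpos i).le
    have hb2 : ∀ i, 2 ^ (η - 1) * phat i ≤ x0 := by
      intro i
      calc 2 ^ (η - 1) * phat i ≤ p i * phat i :=
            mul_le_mul_of_nonneg_right (hsize i) (hphatpos i).le
        _ = x0 := by
            rw [hphat_eq, hx0, Finset.mul_prod_erase _ _ (Finset.mem_univ i)]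
    have hstep : 2 ^ (η - 1) * (2 * |∑ i, r i * phat i|)
        ≤ (n : ℤ) * (2 * (2 ^ ε - 1) * x0) := by
      calc 2 ^ (η - 1) * (2 * |∑ i, r i * phat i|)
          ≤ 2 ^ (η - 1) * (2 * ∑ i, |r i * phat i|) := by
            have := Finset.abs_sum_le_sum_abs (fun i => r i * phat i) Finset.univ
            nlinarith
        _ ≤ 2 ^ (η - 1) * (2 * ∑ i, (2 ^ ε - 1) * phat i) := by
            have := Finset.sum_le_sum (fun i (_ : i ∈ Finset.univ) => hb1 i)
            nlinarith
        _ = ∑ i : Fin n, 2 * (2 ^ ε - 1) * (2 ^ (η - 1) * phat i) := by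
            simp only [Finset.mul_sum]
            exact Finset.sum_congr rfl fun i _ => by ring
        _ ≤ ∑ i : Fin n, 2 * (2 ^ ε - 1) * x0 := by
            refine Finset.sum_le_sum fun i _ => ?_
            have h2e : (0:ℤ) ≤ 2 * (2 ^ ε - 1) := by
              have := pow_pos (show (0:ℤ) < 2 by norm_num) ε; omega
            exact mul_le_mul_of_nonneg_left (hb2 i) h2e
        _ = (n : ℤ) * (2 * (2 ^ ε - 1) * x0) := by
            rw [Finset.sum_const, Finset.card_univ, Fintype.card_fin]; ring
    have hlt : (n : ℤ) * (2 * (2 ^ ε - 1) * x0) < 2 ^ (η - 1) * x0 := by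
      have hε : (2:ℤ) ^ (ε + 1) = 2 * 2 ^ ε := by ring
      have hn' : (1:ℤ) ≤ (n:ℤ) := by exact_mod_cast hn
      have h1 : (n:ℤ) * 2 ^ (ε + 1) * x0 ≤ 2 ^ (η - 1) * x0 :=
        mul_le_mul_of_nonneg_right hbound hx0pos.le
      have h2 : (0:ℤ) < (n:ℤ) * x0 := mul_pos (by linarith) hx0pos
      have h3 : (n:ℤ) * (2 * (2 ^ ε - 1) * x0)
          = (n:ℤ) * 2 ^ (ε + 1) * x0 - 2 * ((n:ℤ) * x0) := by rw [hε]; ring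
      linarith
    have := lt_of_le_of_lt hstep hlt
    exact lt_of_mul_lt_mul_left this h2pos.le
  refine ⟨habs, fun m hm hlo hhi => ?_⟩
  have hdvd : x0 ∣ (∑ i, r i * phat i) - m := (hm.symm.trans hmain).dvd
  have hs := abs_lt.1 (show |2 * ∑ i, r i * phat i| < x0 by rwa [abs_mul, abs_two])
  have habs2 : |(∑ i, r i * phat i) - m| < x0 := by
    rw [abs_sub_lt_iff]; constructor <;> linarith [hs.1, hs.2]
  have h0 := Int.eq_zero_of_abs_lt_dvd hdvd habs2
  linarith
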